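/- Fix an integer k ≥ 2. For a positive integer d, define a_d = (μ ⋆ Λ^{⋆2})(d) and b_d = μ(d) ∑_{q_1 ≠ q_2, q_1 q_2 | d} (log q_1)(log q_2) (sum over ordered pairs of distinct primes dividing d). Then the difference c_d = a_d − b_d vanishes unless d = p^k m with p prime, k ≥ 2, and m squarefree coprime to p, in which case c_d = (log p)^2 μ(m). -/

import Mathlib

open ArithmeticFunction Finset
open scoped ArithmeticFunction.zeta

noncomputable def muR : ArithmeticFunction ℝ :=
  ((ArithmeticFunction.moebius : ArithmeticFunction ℤ) : ArithmeticFunction ℝ)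

noncomputable def muLog : ArithmeticFunction ℝ :=
  ArithmeticFunction.pmul muR ArithmeticFunction.log

lemma muLog_mul_zeta : muLog * ζ = -Λ := by
  ext n
  rw [coe_mul_zeta_apply]
  simp only [muLog, muR, pmul_apply, intCoe_apply, log_apply]
  show _ = -(Λ n)
  exact sum_moebius_mul_log_eq

lemma moebius_mul_vonMangoldt : (muR * Λ) = -muLog := by
  have h : muLog = -(Λ * muR) := by
    calc muLog = muLog * ((ζ : ArithmeticFunction ℝ) * muR) := by
          rw [muR, coe_zeta_mul_coe_moebius, mul_one]
      _ = (muLog * ζ) * muR := by ring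
      _ = -(Λ * muR) := by rw [muLog_mul_zeta]; ring
  rw [mul_comm, ← neg_neg (Λ * _), ← h]

lemma moebius_mul_vonMangoldt_apply (n : ℕ) :
    (muR * Λ) n = -((ArithmeticFunction.moebius n : ℝ) * Real.log n) := by
  rw [moebius_mul_vonMangoldt]
  show -(muLog n) = _
  simp [muLog, muR, log_apply]

/-- `a d = (μ ⋆ Λ ⋆ Λ)(d)`. -/
noncomputable def aCoeff (d : ℕ) : ℝ :=
  ((↑(ArithmeticFunction.moebius) : ArithmeticFunction ℝ) *
    ArithmeticFunction.vonMangoldt * ArithmeticFunction.vonMangoldt) d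

/-- `b d = μ(d) ∑_{(q₁,q₂) distinct primes dividing d} (log q₁)(log q₂)`. -/
noncomputable def bCoeff (d : ℕ) : ℝ :=
  (ArithmeticFunction.moebius d : ℝ) *
    ∑ q₁ ∈ d.primeFactors, ∑ q₂ ∈ d.primeFactors \ {q₁},
      Real.log q₁ * Real.log q₂

lemma aCoeff_eq(d : ℕ) :
    aCoeff d = ∑ v ∈ d.divisors,
      -((ArithmeticFunction.moebius (d / v) : ℝ) * Real.log ((d / v : ℕ) : ℝ)) * Λ v := by
  rw [aCoeff, mul_apply, Nat.sum_divisorsAntidiagonal' (f := fun a b => ((↑(ArithmeticFunction.moebius) : ArithmeticFunction ℝ) * Λ) a * Λ b)]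
  exact Finset.sum_congr rfl fun v _ => by rw [show ((↑(ArithmeticFunction.moebius) : ArithmeticFunction ℝ) * Λ) (d/v) = (muR * Λ) (d/v) from rfl, moebius_mul_vonMangoldt_apply]

lemma moebius_div_eq_zero {d v s : ℕ} (hv : v ∣ d) (hs : s.Prime) (hsd : s * s ∣ d)
    (hsv : ¬ s ∣ v) : ArithmeticFunction.moebius (d / v) = 0 := by
  apply moebius_eq_zero_of_not_squarefree
  intro hsq
  have hc : Nat.Coprime s v := (Nat.Prime.coprime_iff_not_dvd hs).mpr hsv
  have hcop : Nat.Coprime (s * s) v := Nat.Coprime.mul hc hc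
  have hdvd : s * s ∣ d / v :=
    hcop.dvd_of_dvd_mul_right (by rwa [Nat.div_mul_cancel hv])
  exact hs.not_isUnit (hsq s hdvd)

lemma bCoeff_of_not_squarefree {d : ℕ} (h : ¬ Squarefree d) : bCoeff d = 0 := by
  rw [bCoeff, moebius_eq_zero_of_not_squarefree h]; simp

lemma aCoeff_two_primes {d p r : ℕ} (hd : d ≠ 0) (hp : p.Prime) (hr : r.Prime)
    (hpr : p ≠ r) (hpd : p * p ∣ d) (hrd : r * r ∣ d) : aCoeff d = 0 := by
  rw [aCoeff_eq]
  apply Finset.sum_eq_zero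
  intro v hv
  rw [Nat.mem_divisors] at hv
  rcases eq_or_ne (Λ v) 0 with h0 | h0
  · rw [h0, mul_zero]
  · obtain ⟨q, j, hq, hj, rfl⟩ := vonMangoldt_ne_zero_iff.mp h0
    have hq' : q.Prime := Nat.prime_iff.mpr hq
    -- pick s ∈ {p, r} with s ≠ q
    have key : ∀ s : ℕ, s.Prime → s * s ∣ d → s ≠ q →
        ArithmeticFunction.moebius (d / q ^ j) = 0 := by
      intro s hs hsd hsq
      refine moebius_div_eq_zero hv.1 hs hsd ?_
      intro hdvd
      exact hsq ((Nat.prime_dvd_prime_iff_eq hs hq').mp (hs.dvd_of_dvd_pow hdvd))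
    rcases eq_or_ne p q with rfl | hpq
    · rw [key r hr hrd (Ne.symm hpr)]; simp
    · rw [key p hp hpd hpq]; simp

lemma aCoeff_pk {p k m : ℕ} (hp : p.Prime) (hk : 2 ≤ k) (hm : Squarefree m)
    (hpm : ¬ p ∣ m) : aCoeff (p ^ k * m) =
      Real.log p ^ 2 * (ArithmeticFunction.moebius m : ℝ) := by
  have hm0 : m ≠ 0 := hm.ne_zero
  have hp0 : (0:ℕ) < p := hp.pos
  have hd0 : p ^ k * m ≠ 0 := by positivity
  set d := p ^ k * m with hd
  have hppd : p * p ∣ d := by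
    have : p * p ∣ p ^ k := by
      rw [← sq]
      exact pow_dvd_pow p hk
    exact this.trans (Dvd.intro m rfl)
  have hk1 : k - 1 ≠ 0 := by omega
  have hmem1 : p ^ (k - 1) ∈ d.divisors := by
    rw [Nat.mem_divisors]
    exact ⟨(pow_dvd_pow p (by omega)).trans (Dvd.intro m rfl), hd0⟩
  have hmem2 : p ^ k ∈ d.divisors := by
    rw [Nat.mem_divisors]
    exact ⟨Dvd.intro m rfl, hd0⟩
  have hne : p ^ (k - 1) ≠ p ^ k :=
    ne_of_lt (Nat.pow_lt_pow_right hp.one_lt (by omega))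
  have hdiv2 : d / p ^ k = m := by rw [hd, Nat.mul_div_cancel_left _ (Nat.pow_pos hp0)]
  have hdiv1 : d / p ^ (k - 1) = p * m := by
    have : d = p ^ (k - 1) * (p * m) := by
      rw [hd, ← mul_assoc, ← pow_succ]
      congr 2
      omega
    rw [this, Nat.mul_div_cancel_left _ (Nat.pow_pos hp0)]
  have hcop : Nat.Coprime p m := (Nat.Prime.coprime_iff_not_dvd hp).mpr hpm
  rw [aCoeff_eq]
  rw [← Finset.sum_subset (s₁ := {p ^ (k - 1), p ^ k}) (by
      intro x hx
      simp only [Finset.mem_insert, Finset.mem_singleton] at hx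
      rcases hx with rfl | rfl
      exacts [hmem1, hmem2])]
  · rw [Finset.sum_pair hne, hdiv1, hdiv2]
    have hΛ1 : Λ (p ^ (k - 1)) = Real.log p := by
      rw [vonMangoldt_apply_pow hk1, vonMangoldt_apply_prime hp]
    have hΛ2 : Λ (p ^ k) = Real.log p := by
      rw [vonMangoldt_apply_pow (by omega), vonMangoldt_apply_prime hp]
    have hμ : ArithmeticFunction.moebius (p * m) = -ArithmeticFunction.moebius m := by
      rw [isMultiplicative_moebius.map_mul_of_coprime hcop, moebius_apply_prime hp, neg_one_mul]
    have hlog : Real.log ((p * m : ℕ) : ℝ) = Real.log p + Real.log m := by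
      rw [Nat.cast_mul, Real.log_mul (by positivity) (by exact_mod_cast hm0)]
    rw [hΛ1, hΛ2, hμ, hlog]
    push_cast
    ring
  · intro v hv hvn
    rw [Nat.mem_divisors] at hv
    simp only [Finset.mem_insert, Finset.mem_singleton, not_or] at hvn
    rcases eq_or_ne (Λ v) 0 with h0 | h0
    · rw [h0, mul_zero]
    · obtain ⟨q, j, hq, hj, rfl⟩ := vonMangoldt_ne_zero_iff.mp h0
      have hq' : q.Prime := Nat.prime_iff.mpr hq
      rcases eq_or_ne q p with rfl | hqp
      · -- q = p : j ≤ k - 2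
        have hjk : j ≤ k := by
          have h1 : q ^ j ∣ q ^ k := by
            refine (Nat.Coprime.dvd_of_dvd_mul_right ?_ hv.1)
            exact Nat.Coprime.pow_left j hcop
          exact (Nat.pow_dvd_pow_iff_le_right hq'.one_lt).mp h1
        have hj2 : j ≤ k - 2 := by
          by_contra hcon
          have hor : j = k - 1 ∨ j = k := by omega
          rcases hor with rfl | rfl
          · exact hvn.1 rfl
          · exact hvn.2 rfl
        have hdv : d / q ^ j = q ^ (k - j) * m := by
          have : d = q ^ j * (q ^ (k - j) * m) := by
            rw [hd, ← mul_assoc, ← pow_add]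
            congr 2
            omega
          rw [this, Nat.mul_div_cancel_left _ (Nat.pow_pos hp0)]
        have : ArithmeticFunction.moebius (d / q ^ j) = 0 := by
          apply moebius_eq_zero_of_not_squarefree
          rw [hdv]
          intro hsq
          have : q * q ∣ q ^ (k - j) * m := by
            refine Dvd.dvd.mul_right ?_ m
            rw [← sq]
            exact pow_dvd_pow q (by omega)
          exact hq'.not_isUnit (hsq q this)
        rw [this]
        simp
      · have : ArithmeticFunction.moebius (d / q ^ j) = 0 := by
          refine moebius_div_eq_zero hv.1 hp hppd ?_
          intro hdvd
          exact hqp ((Nat.prime_dvd_prime_iff_eq hp hq').mp (hp.dvd_of_dvd_pow hdvd)).symm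
        rw [this]
        simp

lemma aCoeff_squarefree {d : ℕ} (hd : d ≠ 0) (hsf : Squarefree d) :
    aCoeff d = bCoeff d := by
  rw [aCoeff_eq]
  rw [← Finset.sum_subset (s₁ := d.primeFactors) (fun q hq => Nat.mem_divisors.mpr
      ⟨(Nat.mem_primeFactors.mp hq).2.1, hd⟩)]
  · -- main computation
    have hstep : ∀ q ∈ d.primeFactors,
        -((ArithmeticFunction.moebius (d / q) : ℝ) * Real.log ((d / q : ℕ) : ℝ)) * Λ q
        = (ArithmeticFunction.moebius d : ℝ) *
            ∑ q₂ ∈ d.primeFactors \ {q}, Real.log q * Real.log q₂ := by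
      intro q hq
      obtain ⟨hqp, hqd, -⟩ := Nat.mem_primeFactors.mp hq
      have hmd : d = q * (d / q) := (Nat.mul_div_cancel' hqd).symm
      have hqm : ¬ q ∣ (d / q) := by
        intro hc
        have : q * q ∣ d := by
          rw [hmd]
          exact mul_dvd_mul_left q hc
        exact hqp.not_isUnit (hsf q this)
      have hcop : Nat.Coprime q (d / q) := (Nat.Prime.coprime_iff_not_dvd hqp).mpr hqm
      have hμ : ArithmeticFunction.moebius d
          = -ArithmeticFunction.moebius (d / q) := by
        nth_rewrite 1 [hmd]
        rw [isMultiplicative_moebius.map_mul_of_coprime hcop, moebius_apply_prime hqp,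
          neg_one_mul]
      have hmsf : Squarefree (d / q) := hsf.squarefree_of_dvd (Nat.div_dvd_of_dvd hqd)
      have hm0 : d / q ≠ 0 := hmsf.ne_zero
      have hpf : (d / q).primeFactors = d.primeFactors \ {q} := by
        ext r
        simp only [Nat.mem_primeFactors, Finset.mem_sdiff, Finset.mem_singleton]
        constructor
        · rintro ⟨hr, hrm, -⟩
          refine ⟨⟨hr, hrm.trans (Nat.div_dvd_of_dvd hqd), hd⟩, ?_⟩
          rintro rfl
          exact hqm hrm
        · rintro ⟨⟨hr, hrd, -⟩, hrq⟩
          refine ⟨hr, ?_, hm0⟩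
          have : r ∣ q * (d / q) := by rw [← hmd]; exact hrd
          rcases (Nat.Prime.dvd_mul hr).mp this with h | h
          · exact absurd ((Nat.prime_dvd_prime_iff_eq hr hqp).mp h) hrq
          · exact h
      have hlog : Real.log ((d / q : ℕ) : ℝ)
          = ∑ r ∈ d.primeFactors \ {q}, Real.log r := by
        rw [← hpf]
        conv_lhs => rw [← Nat.prod_primeFactors_of_squarefree hmsf]
        push_cast
        rw [Real.log_prod]
        intro r hr
        have := (Nat.mem_primeFactors.mp hr).1.pos
        positivity
      rw [hμ, vonMangoldt_apply_prime hqp, hlog]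
      push_cast
      have hswap : ∑ q₂ ∈ d.primeFactors \ {q}, Real.log q * Real.log q₂
          = (∑ r ∈ d.primeFactors \ {q}, Real.log r) * Real.log q := by
        rw [Finset.sum_mul]
        exact Finset.sum_congr rfl fun r _ => mul_comm _ _
      rw [hswap]
      ring
    rw [Finset.sum_congr rfl hstep, bCoeff, Finset.mul_sum]
  · intro v hv hvn
    rw [Nat.mem_divisors] at hv
    rcases eq_or_ne (Λ v) 0 with h0 | h0
    · rw [h0, mul_zero]
    · exfalso
      obtain ⟨q, j, hq, hj, rfl⟩ := vonMangoldt_ne_zero_iff.mp h0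
      have hq' : q.Prime := Nat.prime_iff.mpr hq
      rcases eq_or_ne j 1 with rfl | hj1
      · rw [pow_one] at hvn hv
        exact hvn (Nat.mem_primeFactors.mpr ⟨hq', hv.1, hd⟩)
      · have : q * q ∣ d := by
          refine dvd_trans ?_ hv.1
          rw [← sq]
          exact pow_dvd_pow q (by omega)
        exact hq'.not_isUnit (hsf q this)

/-- The difference `c d = a d − b d` vanishes unless `d = p^k m` with `p`
prime, `k ≥ 2`, and `m` squarefree coprime to `p`, in which case
`c d = (log p)^2 μ(m)`. -/
theorem cCoeff_characterization (d : ℕ) (hd : 1 ≤ d) :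
    (aCoeff d - bCoeff d ≠ 0 →
      ∃ p k m : ℕ, p.Prime ∧ 2 ≤ k ∧ Squarefree m ∧ ¬ p ∣ m ∧ d = p ^ k * m) ∧
    (∀ p k m : ℕ, p.Prime → 2 ≤ k → Squarefree m → ¬ p ∣ m → d = p ^ k * m →
      aCoeff d - bCoeff d = (Real.log p) ^ 2 * (ArithmeticFunction.moebius m : ℝ)) := by
  have hd0 : d ≠ 0 := by omega
  constructor
  · intro hne
    by_contra hno
    apply hne
    rcases em (Squarefree d) with hsf | hsf
    · rw [aCoeff_squarefree hd0 hsf, sub_self]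
    · obtain ⟨p, hp, hppd⟩ := by
        have := (Nat.squarefree_iff_prime_squarefree (n := d)).not.mp hsf
        push_neg at this
        exact this
      have hp' : p.Prime := hp
      set k := d.factorization p with hkdef
      set m := d / p ^ k with hmdef
      have hdm : d = p ^ k * m := (Nat.ordProj_mul_ordCompl_eq_self d p).symm
      have hpm : ¬ p ∣ m := Nat.not_dvd_ordCompl hp' hd0
      have hk2 : 2 ≤ k := by
        have : p ^ 2 ∣ d := by rwa [sq]
        exact (Nat.Prime.pow_dvd_iff_le_factorization hp hd0).mp this
      have hmsf : ¬ Squarefree m := by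
        intro hmsf
        exact hno ⟨p, k, m, hp', hk2, hmsf, hpm, hdm⟩
      obtain ⟨r, hr, hrrm⟩ := by
        have := (Nat.squarefree_iff_prime_squarefree (n := m)).not.mp hmsf
        push_neg at this
        exact this
      have hr' : r.Prime := hr
      have hrp : p ≠ r := by
        rintro rfl
        exact hpm ((dvd_mul_left p p).trans hrrm)
      have hrrd : r * r ∣ d := hrrm.trans (Nat.ordCompl_dvd d p)
      rw [aCoeff_two_primes hd0 hp' hr' hrp hppd hrrd,
        bCoeff_of_not_squarefree hsf, sub_self]
  · rintro p k m hp hk hm hpm rfl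
    have hppd : p * p ∣ p ^ k * m := by
      refine Dvd.dvd.mul_right ?_ m
      rw [← sq]
      exact pow_dvd_pow p hk
    have hnsf : ¬ Squarefree (p ^ k * m) := by
      intro hsq
      exact hp.not_isUnit (hsq p hppd)
    rw [aCoeff_pk hp hk hm hpm, bCoeff_of_not_squarefree hnsf, sub_zero]
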